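/- Every finite negation-closed epistemic space is identifiable in the limit by minimal revision; equivalently, minimal revision is universal on positive and negative data over finite spaces, since negation-closed spaces with point-separating observables are strongly separated. -/
import Mathlib


namespace Epi

variable {W : Type*}

/-- The set of observables true at state `s`. -/
def obsAt (O : Set (Set W)) (s : W) : Set (Set W) := {p ∈ O | s ∈ p}

/-- The epistemic-space separation condition: distinct worlds satisfy distinct observables. -/
def Separating (O : Set (Set W)) : Prop := ∀ s t : W, obsAt O s = obsAt O t → s = t

/-- `≼`-minimal elements of a set `X`. -/
def minIn (R : W → W → Prop) (X : Set W) : Set W :=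
  {s ∈ X | ∀ t ∈ X, (R s t ∨ R t s) → R s t}

def PreorderOn (R : W → W → Prop) : Prop := Reflexive R ∧ Transitive R

def TotalPreorderOn (R : W → W → Prop) : Prop :=
  Reflexive R ∧ Transitive R ∧ ∀ s t : W, R s t ∨ R t s

/-- Strict part of a preorder. -/
def strictR (R : W → W → Prop) (s t : W) : Prop := R s t ∧ ¬ R t s

/-- One-step minimal revision (conservative upgrade) by observable `p`. -/
def miniRev (R : W → W → Prop) (p : Set W) : W → W → Prop :=
  fun s t => (s ∈ minIn R p ∧ t ∉ minIn R p) ∨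
    (R s t ∧ ¬ (t ∈ minIn R p ∧ s ∉ minIn R p))

/-- One-step lexicographic upgrade by observable `p`. -/
def lexRev (R : W → W → Prop) (p : Set W) : W → W → Prop :=
  fun s t => (s ∈ p ∧ t ∈ p ∧ R s t) ∨ (s ∉ p ∧ t ∉ p ∧ R s t) ∨ (s ∈ p ∧ t ∉ p)

/-- Iterated belief revision along a finite data sequence. -/
def iterRev (rev : (W → W → Prop) → Set W → (W → W → Prop))
    (R : W → W → Prop) (σ : List (Set W)) : W → W → Prop :=
  σ.foldl rev R

/-- The initial segment of length `n` of a data stream. -/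
def seg (f : ℕ → Set W) (n : ℕ) : List (Set W) := (List.range n).map f

/-- All elements of the stream are observables. -/
def StreamIn (O : Set (Set W)) (f : ℕ → Set W) : Prop := ∀ n, f n ∈ O

/-- Soundness of a stream w.r.t. `s`. -/
def SoundStream (s : W) (f : ℕ → Set W) : Prop := ∀ n, s ∈ f n

/-- Completeness of a stream w.r.t. `s`. -/
def CompleteStream (O : Set (Set W)) (s : W) (f : ℕ → Set W) : Prop :=
  ∀ p ∈ obsAt O s, ∃ n, f n = p

/-- Canonical learner induced by minimal revision and prior `R`. -/
def miniLearner (R : W → W → Prop) (σ : List (Set W)) : Set W :=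
  minIn (iterRev miniRev R σ) Set.univ

/-- Canonical learner induced by lexicographic upgrade and prior `R`. -/
def lexLearner (R : W → W → Prop) (σ : List (Set W)) : Set W :=
  minIn (iterRev lexRev R σ) Set.univ

/-- Canonical learner induced by conditioning and prior `R`:
minimal elements among the worlds surviving all observations in `σ`. -/
def condLearner (R : W → W → Prop) (σ : List (Set W)) : Set W :=
  minIn R {w | ∀ p ∈ σ, w ∈ p}

/-- A learner identifies state `s` in the limit. -/
def IdentifiesInLimit (O : Set (Set W)) (L : List (Set W) → Set W) (s : W) : Prop :=
  ∀ f : ℕ → Set W, StreamIn O f → SoundStream s f → CompleteStream O s f →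
    ∃ n, ∀ k, n ≤ k → L (seg f k) = {s}

/-- Finite identification: the learner makes exactly one guess, and it is correct. -/
def FinitelyIdentifies (O : Set (Set W)) (L : List (Set W) → Option W) (s : W) : Prop :=
  ∀ f : ℕ → Set W, StreamIn O f → SoundStream s f → CompleteStream O s f →
    ∃ n, L (seg f n) = some s ∧ ∀ m, m ≠ n → L (seg f m) = none

/-- A definite finite tell-tale map. -/
def DFTTMap (O : Set (Set W)) (D : W → Set (Set W)) : Prop :=
  ∀ s : W, (D s).Finite ∧ D s ⊆ obsAt O s ∧ ∀ t : W, D s ⊆ obsAt O t → s = t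

/-- A finite space mini tell-tale map for `R` and the space. -/
def FSMiniTellTaleMap (O : Set (Set W)) (R : W → W → Prop) (F : W → Set (Set W)) : Prop :=
  ∀ s : W, F s ⊆ obsAt O s ∧
    ∃ p ∈ F s, s ∈ minIn R p ∧
      ∀ t : W, t ≠ s → (R s t ∧ R t s) → t ∈ minIn R p →
        ∃ q ∈ F s, s ∈ minIn R q ∧ t ∉ minIn R q

/-- A generalised conditioning tell-tale map for `R` and the space. -/
def GenCondTellTaleMap (O : Set (Set W)) (R : W → W → Prop) (F : W → Set (Set W)) : Prop :=
  ∀ s : W,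
    (F s).Finite ∧ F s ⊆ obsAt O s ∧
    (∀ t : W, (R s t ∨ R t s) → F s ⊆ obsAt O t → s ≠ t → strictR R s t) ∧
    (∀ F' : Set (Set W), F'.Finite → F s ⊆ F' → F' ⊆ obsAt O s →
      ∀ t : W, ¬ (R s t ∨ R t s) → F' ⊆ obsAt O t →
        ∃ v : W, strictR R v t ∧ F' ⊆ obsAt O v)

/-- Fair data stream w.r.t. `s` (finitely many, eventually corrected, errors). -/
def FairStream (O : Set (Set W)) (s : W) (f : ℕ → Set W) : Prop :=
  CompleteStream O s f ∧ (∃ n, ∀ k, n ≤ k → s ∈ f k) ∧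
    (∀ i, s ∉ f i → ∃ k, i < k ∧ f k = (f i)ᶜ)


section Aux

lemma mem_minIn_total {R : W → W → Prop} (hR : TotalPreorderOn R) {X : Set W} {s : W} :
    s ∈ minIn R X ↔ s ∈ X ∧ ∀ t ∈ X, R s t := by
  simp only [minIn, Set.mem_setOf_eq]
  exact ⟨fun ⟨hs, h⟩ => ⟨hs, fun t ht => h t ht (hR.2.2 s t)⟩,
    fun ⟨hs, h⟩ => ⟨hs, fun t ht _ => h t ht⟩⟩

lemma miniRev_char {R : W → W → Prop} (hR : TotalPreorderOn R) (p : Set W) (s t : W) :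
    miniRev R p s t ↔ (s ∈ minIn R p ∨ (t ∉ minIn R p ∧ R s t)) := by
  simp only [miniRev]
  constructor
  · rintro (⟨hs, _⟩ | ⟨hst, _⟩)
    · exact Or.inl hs
    · by_cases hs : s ∈ minIn R p
      · exact Or.inl hs
      · refine Or.inr ⟨?_, hst⟩
        intro ht
        tauto
  · rintro (hs | ⟨ht, hst⟩)
    · by_cases ht : t ∈ minIn R p
      · refine Or.inr ⟨?_, fun h => h.2 hs⟩
        exact ((mem_minIn_total hR).1 hs).2 t ((mem_minIn_total hR).1 ht).1
      · exact Or.inl ⟨hs, ht⟩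
    · exact Or.inr ⟨hst, fun h => ht h.1⟩

lemma miniRev_total {R : W → W → Prop} (hR : TotalPreorderOn R) (p : Set W) :
    TotalPreorderOn (miniRev R p) := by
  refine ⟨fun s => ?_, fun s t u hst htu => ?_, fun s t => ?_⟩
  · rw [miniRev_char hR]
    by_cases h : s ∈ minIn R p
    · exact Or.inl h
    · exact Or.inr ⟨h, hR.1 s⟩
  · rw [miniRev_char hR] at hst htu ⊢
    rcases hst with hs | ⟨ht, hst⟩
    · exact Or.inl hs
    · rcases htu with ht' | ⟨hu, htu⟩
      · exact absurd ht' ht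
      · exact Or.inr ⟨hu, hR.2.1 hst htu⟩
  · rw [miniRev_char hR, miniRev_char hR]
    by_cases hs : s ∈ minIn R p
    · exact Or.inl (Or.inl hs)
    · by_cases ht : t ∈ minIn R p
      · exact Or.inr (Or.inl ht)
      · rcases hR.2.2 s t with h | h
        · exact Or.inl (Or.inr ⟨ht, h⟩)
        · exact Or.inr (Or.inr ⟨hs, h⟩)

lemma minIn_univ_miniRev {R : W → W → Prop} (hR : TotalPreorderOn R) (p : Set W)
    (h : (minIn R p).Nonempty) :
    minIn (miniRev R p) Set.univ = minIn R p := by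
  ext s
  rw [mem_minIn_total (miniRev_total hR p)]
  constructor
  · rintro ⟨-, hmin⟩
    obtain ⟨x, hx⟩ := h
    have := (miniRev_char hR p s x).1 (hmin x (Set.mem_univ x))
    rcases this with hs | ⟨hx', _⟩
    · exact hs
    · exact absurd hx hx'
  · intro hs
    refine ⟨Set.mem_univ s, fun t _ => ?_⟩
    rw [miniRev_char hR]
    exact Or.inl hs

lemma minIn_eq_inter {R : W → W → Prop} (hR : TotalPreorderOn R) (p : Set W)
    (h : (minIn R Set.univ ∩ p).Nonempty) :
    minIn R p = minIn R Set.univ ∩ p := by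
  obtain ⟨x, hxu, hxp⟩ := h
  have hx := (mem_minIn_total hR).1 hxu
  ext s
  rw [mem_minIn_total hR]
  constructor
  · rintro ⟨hsp, hmin⟩
    refine ⟨(mem_minIn_total hR).2 ⟨Set.mem_univ s, fun t _ => ?_⟩, hsp⟩
    exact hR.2.1 (hmin x hxp) (hx.2 t (Set.mem_univ t))
  · rintro ⟨hsu, hsp⟩
    exact ⟨hsp, fun t _ => ((mem_minIn_total hR).1 hsu).2 t (Set.mem_univ t)⟩

lemma mem_obsAt {O : Set (Set W)} {s : W} {p : Set W} :
    p ∈ obsAt O s ↔ p ∈ O ∧ s ∈ p := Iff.rfl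

lemma strong_sep (O : Set (Set W)) (hsep : Separating O)
    (hneg : ∀ p ∈ O, ∃ q ∈ O, p = qᶜ) {s t : W} (hst : s ≠ t) :
    ∃ p ∈ obsAt O s, t ∉ p := by
  have hne : obsAt O s ≠ obsAt O t := fun h => hst (hsep s t h)
  have : ∃ p, (p ∈ obsAt O s ∧ p ∉ obsAt O t) ∨ (p ∈ obsAt O t ∧ p ∉ obsAt O s) := by
    by_contra h
    push_neg at h
    exact hne (Set.Subset.antisymm (fun p hp => (h p).1 hp) (fun p hp => (h p).2 hp))
  obtain ⟨p, ⟨hps, hpt⟩ | ⟨hpt, hps⟩⟩ := this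
  · obtain ⟨hpO, hsp⟩ := mem_obsAt.1 hps
    exact ⟨p, hps, fun ht => hpt (mem_obsAt.2 ⟨hpO, ht⟩)⟩
  · obtain ⟨hpO, htp⟩ := mem_obsAt.1 hpt
    obtain ⟨q, hqO, hpq⟩ := hneg p hpO
    have hsq : s ∈ q := by
      by_contra hsq
      exact hps (mem_obsAt.2 ⟨hpO, hpq ▸ hsq⟩)
    refine ⟨q, mem_obsAt.2 ⟨hqO, hsq⟩, fun htq => ?_⟩
    rw [hpq] at htp
    exact htp htq

end Aux

/-- Every finite negation-closed epistemic space is identifiable in the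
limit by minimal revision (for some prior total preorder). -/
theorem mini_universal_on_finite_negation_closed {W : Type*} [Finite W]
    (O : Set (Set W)) (hsep : Separating O)
    (hneg : ∀ p ∈ O, ∃ q ∈ O, p = qᶜ) :
    ∃ R : W → W → Prop, TotalPreorderOn R ∧
      ∀ s : W, IdentifiesInLimit O (miniLearner R) s := by
  refine ⟨fun _ _ => True, ⟨fun _ => trivial, fun _ _ _ _ _ => trivial,
    fun _ _ => Or.inl trivial⟩, ?_⟩
  intro s f hin hsound hcomp
  set R0 : W → W → Prop := fun _ _ => True with hR0
  have hR0tp : TotalPreorderOn R0 := ⟨fun _ => trivial, fun _ _ _ _ _ => trivial,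
    fun _ _ => Or.inl trivial⟩
  have key : ∀ k, TotalPreorderOn (iterRev miniRev R0 (seg f k)) ∧
      minIn (iterRev miniRev R0 (seg f k)) Set.univ = {w | ∀ i < k, w ∈ f i} := by
    intro k
    induction k with
    | zero =>
      refine ⟨by simpa [iterRev, seg] using hR0tp, ?_⟩
      ext w
      simp [iterRev, seg, minIn, hR0]
    | succ k ih =>
      obtain ⟨htp, hmin⟩ := ih
      have hseg : seg f (k + 1) = seg f k ++ [f k] := by
        simp [seg, List.range_succ]
      have hiter : iterRev miniRev R0 (seg f (k + 1)) =
          miniRev (iterRev miniRev R0 (seg f k)) (f k) := by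
        rw [hseg]
        simp [iterRev, List.foldl_append]
      have hsmem : s ∈ minIn (iterRev miniRev R0 (seg f k)) Set.univ ∩ f k := by
        rw [hmin]
        exact ⟨fun i _ => hsound i, hsound k⟩
      have hinter := minIn_eq_inter htp (f k) ⟨s, hsmem⟩
      have hne : (minIn (iterRev miniRev R0 (seg f k)) (f k)).Nonempty :=
        ⟨s, hinter ▸ hsmem⟩
      constructor
      · rw [hiter]
        exact miniRev_total htp (f k)
      · rw [hiter, minIn_univ_miniRev htp (f k) hne, hinter, hmin]
        ext w
        simp only [Set.mem_inter_iff, Set.mem_setOf_eq, Nat.lt_succ_iff_lt_or_eq]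
        constructor
        · rintro ⟨h1, h2⟩ i (hi | rfl)
          · exact h1 i hi
          · exact h2
        · intro h
          exact ⟨fun i hi => h i (Or.inl hi), h k (Or.inr rfl)⟩
  have hsep' : ∀ t : W, t ≠ s → ∃ m, t ∉ f m := by
    intro t ht
    obtain ⟨p, hp, htp⟩ := strong_sep O hsep hneg (Ne.symm ht)
    obtain ⟨m, hm⟩ := hcomp p hp
    exact ⟨m, hm ▸ htp⟩
  have : Fintype W := Fintype.ofFinite W
  have : Fintype {t : W // t ≠ s} := Fintype.ofFinite _
  choose m hm using fun t : {t : W // t ≠ s} => hsep' t t.2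
  refine ⟨(Finset.univ.sup fun t : {t : W // t ≠ s} => m t) + 1, ?_⟩
  intro k hk
  show minIn (iterRev miniRev R0 (seg f k)) Set.univ = {s}
  rw [(key k).2]
  ext w
  simp only [Set.mem_setOf_eq, Set.mem_singleton_iff]
  constructor
  · intro hw
    by_contra hws
    refine hm ⟨w, hws⟩ (hw (m ⟨w, hws⟩) ?_)
    calc m ⟨w, hws⟩ ≤ Finset.univ.sup fun t : {t : W // t ≠ s} => m t :=
          Finset.le_sup (Finset.mem_univ _)
      _ < k := hk
  · rintro rfl i _
    exact hsound i

end Epi
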